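/- Let A be a real symmetric n×n matrix, x a unit eigenvector of A with eigenvalue λ, and x̂ a nonzero vector. Then the Rayleigh quotient d̂ = (x̂ᵀ A x̂)/(x̂ᵀ x̂) satisfies |λ - d̂| ≤ 2‖A‖·‖x - x̂‖/‖x̂‖ + ‖A‖·‖x - x̂‖²/‖x̂‖² , in particular the Rayleigh quotient error is controlled by the eigenvector error. -/

import Mathlib

open Matrix
open scoped Matrix.Norms.L2Operator InnerProductSpace

/-- Rayleigh quotient error bound: if `A` is symmetric, `Ax = λx` with `‖x‖ = 1`, and
`x̂ ≠ 0`, then the Rayleigh quotient `d̂ = ⟪x̂, Ax̂⟫/⟪x̂, x̂⟫` satisfies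
`|λ - d̂| ≤ 2‖A‖‖x - x̂‖/‖x̂‖ + ‖A‖‖x - x̂‖²/‖x̂‖²`. -/
theorem stmt5 {n : ℕ} (A : Matrix (Fin n) (Fin n) ℝ) (hA : Aᵀ = A)
    (x xhat : EuclideanSpace ℝ (Fin n)) (lam : ℝ)
    (hx : Matrix.toEuclideanLin A x = lam • x) (hxnorm : ‖x‖ = 1) (hxhat : xhat ≠ 0)
    (dhat : ℝ)
    (hdhat : dhat = ⟪xhat, Matrix.toEuclideanLin A xhat⟫_ℝ / ⟪xhat, xhat⟫_ℝ) :
    |lam - dhat| ≤ 2 * ‖A‖ * ‖x - xhat‖ / ‖xhat‖ + ‖A‖ * ‖x - xhat‖ ^ 2 / ‖xhat‖ ^ 2 := by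
  set L := Matrix.toEuclideanLin A with hL
  have hherm : A.IsHermitian := by
    rwa [Matrix.IsHermitian, Matrix.conjTranspose_eq_transpose_of_trivial]
  have hsym : ∀ v w : EuclideanSpace ℝ (Fin n), ⟪L v, w⟫_ℝ = ⟪v, L w⟫_ℝ :=
    Matrix.isHermitian_iff_isSymmetric.mp hherm
  have hLnorm : ∀ v : EuclideanSpace ℝ (Fin n), ‖L v‖ ≤ ‖A‖ * ‖v‖ := fun v =>
    ((Matrix.toEuclideanLin.trans LinearMap.toContinuousLinearMap A).le_opNorm v)
  have hM : 0 ≤ ‖A‖ := norm_nonneg A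
  have hh : 0 < ‖xhat‖ := norm_pos_iff.mpr hxhat
  -- |lam| ≤ ‖A‖
  have hlam : |lam| ≤ ‖A‖ := by
    have := hLnorm x
    rw [hx, norm_smul, hxnorm] at this
    simpa using this
  set e := x - xhat with he
  have hE : 0 ≤ ‖e‖ := norm_nonneg e
  -- inner product bound
  have hinner : ∀ v : EuclideanSpace ℝ (Fin n), |⟪v, L v⟫_ℝ| ≤ ‖A‖ * ‖v‖ ^ 2 := by
    intro v
    calc |⟪v, L v⟫_ℝ| ≤ ‖v‖ * ‖L v‖ := abs_real_inner_le_norm v (L v)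
      _ ≤ ‖v‖ * (‖A‖ * ‖v‖) := by
          exact mul_le_mul_of_nonneg_left (hLnorm v) (norm_nonneg v)
      _ = ‖A‖ * ‖v‖ ^ 2 := by ring
  -- key identity: lam * ⟪xhat,xhat⟫ - ⟪xhat, L xhat⟫ = lam * ‖e‖^2 - ⟪e, L e⟫
  have hxx : ⟪x, x⟫_ℝ = 1 := by
    rw [real_inner_self_eq_norm_sq, hxnorm]; norm_num
  have hxhatdef : xhat = x - e := by rw [he]; abel
  have hLxhat : L xhat = lam • x - L e := by
    rw [hxhatdef, map_sub, hx]
  have hkey : lam * ⟪xhat, xhat⟫_ℝ - ⟪xhat, L xhat⟫_ℝ = lam * ‖e‖ ^ 2 - ⟪e, L e⟫_ℝ := by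
    have h1 : ⟪x, L e⟫_ℝ = lam * ⟪x, e⟫_ℝ := by
      rw [← hsym x e, hx, real_inner_smul_left]
    rw [hLxhat, hxhatdef]
    simp only [inner_sub_left, inner_sub_right, real_inner_smul_right, h1,
      real_inner_smul_left, hxx, real_inner_comm e x, real_inner_self_eq_norm_sq]
    ring
  have hxhat_inner : ⟪xhat, xhat⟫_ℝ = ‖xhat‖ ^ 2 := real_inner_self_eq_norm_sq xhat
  have hh2 : (0:ℝ) < ‖xhat‖ ^ 2 := by positivity
  have hdiff : lam - dhat = (lam * ‖e‖ ^ 2 - ⟪e, L e⟫_ℝ) / ‖xhat‖ ^ 2 := by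
    rw [hdhat, hxhat_inner, ← hkey, hxhat_inner]
    field_simp
  have hdiffbound : |lam - dhat| ≤ 2 * ‖A‖ * ‖e‖ ^ 2 / ‖xhat‖ ^ 2 := by
    rw [hdiff, abs_div, abs_of_pos hh2]
    rw [div_le_div_iff_of_pos_right hh2]
    calc |lam * ‖e‖ ^ 2 - ⟪e, L e⟫_ℝ| ≤ |lam * ‖e‖ ^ 2| + |⟪e, L e⟫_ℝ| := abs_sub _ _
      _ ≤ ‖A‖ * ‖e‖ ^ 2 + ‖A‖ * ‖e‖ ^ 2 := by
          gcongr
          · rw [abs_mul, abs_of_nonneg (by positivity : (0:ℝ) ≤ ‖e‖ ^ 2)]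
            exact mul_le_mul_of_nonneg_right hlam (by positivity)
          · exact hinner e
      _ = 2 * ‖A‖ * ‖e‖ ^ 2 := by ring
  -- crude bound |lam - dhat| ≤ 2‖A‖
  have hdhatbound : |dhat| ≤ ‖A‖ := by
    rw [hdhat, hxhat_inner, abs_div, abs_of_pos hh2, div_le_iff₀ hh2]
    exact hinner xhat
  rcases le_or_gt ‖e‖ ‖xhat‖ with hcase | hcase
  · -- E ≤ h : use hdiffbound
    refine hdiffbound.trans ?_
    have h1 : 2 * ‖A‖ * ‖e‖ ^ 2 / ‖xhat‖ ^ 2 ≤ 2 * ‖A‖ * ‖e‖ / ‖xhat‖ := by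
      rw [div_le_div_iff₀ hh2 hh]
      calc 2 * ‖A‖ * ‖e‖ ^ 2 * ‖xhat‖ = (2 * ‖A‖ * ‖e‖ * ‖xhat‖) * ‖e‖ := by ring
        _ ≤ (2 * ‖A‖ * ‖e‖ * ‖xhat‖) * ‖xhat‖ := by
            exact mul_le_mul_of_nonneg_left hcase (by positivity)
        _ = 2 * ‖A‖ * ‖e‖ * ‖xhat‖ ^ 2 := by ring
    have h2 : (0:ℝ) ≤ ‖A‖ * ‖e‖ ^ 2 / ‖xhat‖ ^ 2 := by positivity
    linarith
  · -- E > h : use crude bound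
    have hcrude : |lam - dhat| ≤ 2 * ‖A‖ := by
      calc |lam - dhat| ≤ |lam| + |dhat| := abs_sub _ _
        _ ≤ ‖A‖ + ‖A‖ := add_le_add hlam hdhatbound
        _ = 2 * ‖A‖ := by ring
    have h1 : 2 * ‖A‖ ≤ 2 * ‖A‖ * ‖e‖ / ‖xhat‖ := by
      rw [le_div_iff₀ hh]
      have : ‖xhat‖ ≤ ‖e‖ := le_of_lt hcase
      calc 2 * ‖A‖ * ‖xhat‖ ≤ 2 * ‖A‖ * ‖e‖ := by
            exact mul_le_mul_of_nonneg_left this (by positivity)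
        _ = 2 * ‖A‖ * ‖e‖ := rfl
    have h2 : (0:ℝ) ≤ ‖A‖ * ‖e‖ ^ 2 / ‖xhat‖ ^ 2 := by positivity
    linarith
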